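/- If G is a k-degenerate simple graph with maximum degree Δ, k ≤ Δ, and each edge e of G is assigned a list L(e) of colors with |L(e)| ≥ (4k − 2)·Δ − 2k² + 1, then G admits a strong edge coloring in which every edge e receives a color from its own list L(e). -/

import Mathlib

open Finset

/-! ### Auxiliary lemmas -/

/-- Nat division uniqueness helper. -/
private lemma nat_key_eq {a b c d B : ℕ} (hb : b < B) (hd : d < B)
    (h : a * B + b = c * B + d) : a = c ∧ b = d := by
  have hB : 0 < B := lt_of_le_of_lt (Nat.zero_le _) hb
  have h1 : (a * B + b) / B = a := by
    rw [Nat.add_comm, Nat.add_mul_div_right _ _ hB, Nat.div_eq_of_lt hb, Nat.zero_add]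
  have h2 : (c * B + d) / B = c := by
    rw [Nat.add_comm, Nat.add_mul_div_right _ _ hB, Nat.div_eq_of_lt hd, Nat.zero_add]
  have hac : a = c := by rw [← h1, ← h2, h]
  constructor
  · exact hac
  · subst hac; omega

private lemma nat_key_lt {a b c d B : ℕ} (hb : b < B) (hd : d < B)
    (h : a * B + b < c * B + d) : a < c ∨ (a = c ∧ b < d) := by
  rcases lt_trichotomy a c with h' | h' | h'
  · exact Or.inl h'
  · subst h'; right; exact ⟨rfl, by omega⟩
  · exfalso
    have : (a + 1) * B ≤ a * B + b + 1 := by nlinarith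
    have : c * B + d < (c+1) * B := by nlinarith
    have hcb : (c+1) * B ≤ a * B := Nat.mul_le_mul_right _ (by omega)
    omega

open scoped Classical in
private lemma exists_greedy_coloring {α : Type*} (R : α → α → Prop)
    (hsymm : ∀ a b, R a b → R b a) (w : α → ℕ) (L : α → Finset ℕ) :
    ∀ E : Finset α, Set.InjOn w E →
      (∀ e ∈ E, ((E.filter (fun f => R e f ∧ w f < w e)).card < (L e).card)) →
      ∃ C : α → ℕ, (∀ e ∈ E, C e ∈ L e) ∧
        ∀ e ∈ E, ∀ f ∈ E, e ≠ f → R e f → C e ≠ C f := by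
  classical
  intro E
  induction E using Finset.strongInductionOn with
  | _ E ih =>
    intro hinj hcount
    rcases E.eq_empty_or_nonempty with rfl | hne
    · exact ⟨fun _ => 0, by simp, by simp⟩
    obtain ⟨e, heE, hemax⟩ := E.exists_max_image w hne
    set E' := E.erase e with hE'
    have hsub : E' ⊂ E := Finset.erase_ssubset heE
    obtain ⟨C', hC'mem, hC'conf⟩ := ih E' hsub
      (hinj.mono (by exact_mod_cast Finset.coe_subset.mpr hsub.subset))
      (fun f hf => lt_of_le_of_lt
        (Finset.card_le_card (Finset.filter_subset_filter _ hsub.subset))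
        (hcount f (hsub.subset hf)))
    have hconf_sub : E'.filter (fun f => R e f) ⊆
        E.filter (fun f => R e f ∧ w f < w e) := by
      intro f hf
      simp only [Finset.mem_filter] at hf ⊢
      have hfE : f ∈ E := hsub.subset hf.1
      have hne' : f ≠ e := Finset.ne_of_mem_erase hf.1
      refine ⟨hfE, hf.2, lt_of_le_of_ne (hemax f hfE) ?_⟩
      intro hw
      exact hne' (hinj hfE heE hw)
    have hcard : ((E'.filter (fun f => R e f)).image C').card < (L e).card := by
      calc ((E'.filter (fun f => R e f)).image C').card
          ≤ (E'.filter (fun f => R e f)).card := Finset.card_image_le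
        _ ≤ (E.filter (fun f => R e f ∧ w f < w e)).card := Finset.card_le_card hconf_sub
        _ < (L e).card := hcount e heE
    have hnonempty : (L e \ (E'.filter (fun f => R e f)).image C').Nonempty := by
      rw [← Finset.card_pos]
      have := Finset.le_card_sdiff ((E'.filter (fun f => R e f)).image C') (L e)
      omega
    obtain ⟨c, hc⟩ := hnonempty
    rw [Finset.mem_sdiff] at hc
    refine ⟨Function.update C' e c, ?_, ?_⟩
    · intro f hf
      rcases eq_or_ne f e with rfl | hne'
      · simpa using hc.1
      · rw [Function.update_of_ne hne']
        exact hC'mem f (Finset.mem_erase.mpr ⟨hne', hf⟩)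
    · intro f hf g hg hfg hR
      by_cases hfe : f = e
      · by_cases hge : g = e
        · exact absurd (hfe.trans hge.symm) hfg
        · subst hfe
          rw [Function.update_self, Function.update_of_ne hge]
          intro hcontra
          exact hc.2 (Finset.mem_image.mpr ⟨g, Finset.mem_filter.mpr
            ⟨Finset.mem_erase.mpr ⟨hge, hg⟩, hR⟩, hcontra.symm⟩)
      · by_cases hge : g = e
        · subst hge
          rw [Function.update_self, Function.update_of_ne hfe]
          intro hcontra
          exact hc.2 (Finset.mem_image.mpr ⟨f, Finset.mem_filter.mpr
            ⟨Finset.mem_erase.mpr ⟨hfe, hf⟩, hsymm _ _ hR⟩, hcontra⟩)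
        · rw [Function.update_of_ne hfe, Function.update_of_ne hge]
          exact hC'conf f (Finset.mem_erase.mpr ⟨hfe, hf⟩)
            g (Finset.mem_erase.mpr ⟨hge, hg⟩) hfg hR

private lemma exists_degeneracy_order {V : Type*} [Fintype V] (G : SimpleGraph V)
    [DecidableRel G.Adj] (k : ℕ)
    (hdeg : ∀ S : Finset V, S.Nonempty → ∃ v ∈ S, (S.filter (G.Adj v)).card ≤ k) :
    ∃ idx : V → ℕ, Function.Injective idx ∧
      ∀ x, ((G.neighborFinset x).filter (fun y => idx y < idx x)).card ≤ k := by
  classical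
  have main : ∀ S : Finset V, ∃ f : V → ℕ, Set.InjOn f S ∧ (∀ x ∈ S, f x < S.card) ∧
      ∀ x ∈ S, (((G.neighborFinset x) ∩ S).filter (fun y => f y < f x)).card ≤ k := by
    intro S
    induction S using Finset.strongInductionOn with
    | _ S ih =>
      rcases S.eq_empty_or_nonempty with rfl | hne
      · exact ⟨fun _ => 0, by simp, by simp, by simp⟩
      obtain ⟨v, hvS, hvdeg⟩ := hdeg S hne
      obtain ⟨f, hfinj, hflt, hfk⟩ := ih (S.erase v) (Finset.erase_ssubset hvS)
      have hcard : (S.erase v).card = S.card - 1 := Finset.card_erase_of_mem hvS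
      have hcard1 : 1 ≤ S.card := Finset.card_pos.mpr hne
      refine ⟨fun x => if x = v then S.card - 1 else f x, ?_, ?_, ?_⟩
      · intro a ha b hb hab
        simp only [Finset.mem_coe] at ha hb
        have hab : (if a = v then S.card - 1 else f a) = (if b = v then S.card - 1 else f b) := hab
        by_cases hav : a = v <;> by_cases hbv : b = v
        · exact hav.trans hbv.symm
        · exfalso
          rw [if_pos hav, if_neg hbv] at hab
          have h1 := hflt b (Finset.mem_erase.mpr ⟨hbv, hb⟩)
          omega
        · exfalso
          rw [if_neg hav, if_pos hbv] at hab
          have h1 := hflt a (Finset.mem_erase.mpr ⟨hav, ha⟩)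
          omega
        · rw [if_neg hav, if_neg hbv] at hab
          exact hfinj (by simp [ha, hav]) (by simp [hb, hbv]) hab
      · intro x hx
        show (if x = v then S.card - 1 else f x) < S.card
        by_cases hxv : x = v
        · rw [if_pos hxv]; omega
        · rw [if_neg hxv]
          have := hflt x (Finset.mem_erase.mpr ⟨hxv, hx⟩)
          omega
      · intro x hx
        by_cases hxv : x = v
        · subst hxv
          refine le_trans (Finset.card_le_card ?_) hvdeg
          intro y hy
          simp only [Finset.mem_filter, Finset.mem_inter, SimpleGraph.mem_neighborFinset] at hy ⊢
          exact ⟨hy.1.2, hy.1.1⟩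
        · refine le_trans (Finset.card_le_card ?_) (hfk x (Finset.mem_erase.mpr ⟨hxv, hx⟩))
          intro y hy
          simp only [Finset.mem_filter, Finset.mem_inter, if_neg hxv] at hy ⊢
          have hyv : y ≠ v := by
            intro h
            subst h
            rw [if_pos rfl] at hy
            have := hflt x (Finset.mem_erase.mpr ⟨hxv, hx⟩)
            omega
          rw [if_neg hyv] at hy
          exact ⟨⟨hy.1.1, Finset.mem_erase.mpr ⟨hyv, hy.1.2⟩⟩, hy.2⟩
  obtain ⟨f, hinj, _, hk⟩ := main Finset.univ
  refine ⟨f, fun a b hab => hinj (by simp) (by simp) hab, fun x => ?_⟩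
  have := hk x (Finset.mem_univ x)
  simpa using this

/-- A strong edge coloring: any two distinct edges that are adjacent or both
adjacent to a common third edge receive distinct colors. -/
def SimpleGraph.IsStrongEdgeColoring {V : Type*} (G : SimpleGraph V)
    (C : Sym2 V → ℕ) : Prop :=
  ∀ e ∈ G.edgeSet, ∀ f ∈ G.edgeSet, e ≠ f →
    ((∃ v, v ∈ e ∧ v ∈ f) ∨
      ∃ g ∈ G.edgeSet, (∃ v, v ∈ e ∧ v ∈ g) ∧ ∃ w, w ∈ g ∧ w ∈ f) →
    C e ≠ C f

/-- The strong chromatic index: the least number of colors in a strong edge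
coloring of `G`. -/
noncomputable def SimpleGraph.strongChromaticIndex {V : Type*}
    (G : SimpleGraph V) : ℕ :=
  sInf {n | ∃ C : Sym2 V → ℕ, (∀ e ∈ G.edgeSet, C e < n) ∧
    G.IsStrongEdgeColoring C}

/-- A graph is `k`-degenerate if every (induced) subgraph on a nonempty vertex
set has a vertex of degree at most `k` in that subgraph. -/
def SimpleGraph.Degenerate {V : Type*} [Fintype V] (G : SimpleGraph V)
    [DecidableRel G.Adj] (k : ℕ) : Prop :=
  ∀ S : Finset V, S.Nonempty → ∃ v ∈ S, (S.filter (G.Adj v)).card ≤ k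

set_option maxHeartbeats 2000000 in
theorem list_strong_edge_coloring_of_degenerate {V : Type*} [Fintype V]
    (G : SimpleGraph V) [DecidableRel G.Adj] (k : ℕ)
    (hdeg : G.Degenerate k) (hk : k ≤ G.maxDegree)
    (L : Sym2 V → Finset ℕ)
    (hL : ∀ e ∈ G.edgeSet, (4 * k - 2) * G.maxDegree - 2 * k ^ 2 + 1 ≤ (L e).card) :
    ∃ C : Sym2 V → ℕ, (∀ e ∈ G.edgeSet, C e ∈ L e) ∧
      G.IsStrongEdgeColoring C := by
  classical
  -- the case `k = 0` : the graph has no edges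
  by_cases hk0 : k = 0
  · subst hk0
    have hE : ∀ e ∈ G.edgeSet, False := by
      intro e he
      induction e with
      | _ a b =>
        rw [SimpleGraph.mem_edgeSet] at he
        obtain ⟨v, hv, hvdeg⟩ := hdeg {a, b} ⟨a, by simp⟩
        have hv' : v = a ∨ v = b := by simpa using hv
        have : ∃ y ∈ ({a, b} : Finset V), G.Adj v y := by
          rcases hv' with rfl | rfl
        
          · exact ⟨b, by simp, he⟩
          · exact ⟨a, by simp, he.symm⟩
        obtain ⟨y, hy, hadj⟩ := this
        have : y ∈ ({a,b} : Finset V).filter (G.Adj v) := by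
          simp only [Finset.mem_filter]; exact ⟨hy, hadj⟩
        have := Finset.card_pos.mpr ⟨y, this⟩
        omega
    exact ⟨fun _ => 0, fun e he => (hE e he).elim, fun e he => (hE e he).elim⟩
  have hk1 : 1 ≤ k := Nat.one_le_iff_ne_zero.mpr hk0
  obtain ⟨idx, hidx_inj, hback⟩ := exists_degeneracy_order G k hdeg
  set Δ := G.maxDegree with hΔdef
  have hΔ1 : 1 ≤ Δ := le_trans hk1 hk
  set B := (Finset.univ.sup idx) + 1 with hBdef
  have hidxB : ∀ x : V, idx x < B := fun x =>
    Nat.lt_succ_of_le (Finset.le_sup (Finset.mem_univ x))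
  -- lower and higher (w.r.t. idx) endpoints of a `Sym2`
  set Lo : Sym2 V → V := fun f => if idx f.out.1 ≤ idx f.out.2 then f.out.1 else f.out.2
    with hLodef
  set Hi : Sym2 V → V := fun f => if idx f.out.1 ≤ idx f.out.2 then f.out.2 else f.out.1
    with hHidef
  have hmk : ∀ f : Sym2 V, s(Lo f, Hi f) = f := by
    intro f
    rw [hLodef, hHidef]
    dsimp only
    split
    · exact f.out_eq
    · rw [Sym2.eq_swap]
      exact f.out_eq
  have hloh : ∀ f, idx (Lo f) ≤ idx (Hi f) := by
    intro f
    rw [hLodef, hHidef]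
    dsimp only
    split
    · assumption
    · omega
  have hmem : ∀ (x : V) (f : Sym2 V), x ∈ f ↔ (x = Lo f ∨ x = Hi f) := by
    intro x f
    conv_lhs => rw [← hmk f]
    exact Sym2.mem_iff
  -- edges: facts
  have hedge : ∀ f ∈ G.edgeSet, G.Adj (Lo f) (Hi f) ∧ idx (Lo f) < idx (Hi f) := by
    intro f hf
    rw [← hmk f, SimpleGraph.mem_edgeSet] at hf
    refine ⟨hf, lt_of_le_of_ne (hloh f) ?_⟩
    intro heq
    exact G.ne_of_adj hf (hidx_inj heq)
  -- the weight
  set w : Sym2 V → ℕ := fun f => idx (Lo f) * B + idx (Hi f) with hwdef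
  have hwinj : Set.InjOn w (G.edgeFinset : Set (Sym2 V)) := by
    intro f hf g hg hfg
    simp only [Finset.coe_sort_coe, Finset.mem_coe, SimpleGraph.mem_edgeFinset] at hf hg
    rw [hwdef] at hfg
    obtain ⟨h1, h2⟩ := nat_key_eq (hidxB _) (hidxB _) hfg
    rw [← hmk f, ← hmk g, hidx_inj h1, hidx_inj h2]
  -- the conflict relation
  set R : Sym2 V → Sym2 V → Prop := fun e f =>
    (∃ v, v ∈ e ∧ v ∈ f) ∨
      ∃ g ∈ G.edgeSet, (∃ v, v ∈ e ∧ v ∈ g) ∧ ∃ x, x ∈ g ∧ x ∈ f with hRdef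
  have hRsymm : ∀ a b, R a b → R b a := by
    intro a b hab
    rw [hRdef] at hab ⊢
    rcases hab with ⟨z, h1, h2⟩ | ⟨g, hg, ⟨z, hz1, hz2⟩, ⟨y, hy1, hy2⟩⟩
    · exact Or.inl ⟨z, h2, h1⟩
    · exact Or.inr ⟨g, hg, ⟨y, hy2, hy1⟩, ⟨z, hz2, hz1⟩⟩
  -- the main counting estimate
  have hcount : ∀ e ∈ G.edgeFinset,
      ((G.edgeFinset.filter (fun f => R e f ∧ w f < w e)).card < (L e).card) := by
    intro e heF
    have heE : e ∈ G.edgeSet := SimpleGraph.mem_edgeFinset.mp heF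
    obtain ⟨hadj_vu, hji⟩ := hedge e heE
    set v : V := Lo e with hvdef
    set u : V := Hi e with hudef
    set j : ℕ := idx v with hjdef
    set i : ℕ := idx u with hidef
    have hadj_uv : G.Adj u v := hadj_vu.symm
    have hne_uv : u ≠ v := G.ne_of_adj hadj_uv
    have h_e_eq : s(v, u) = e := hmk e
    set F := G.edgeFinset.filter (fun f => R e f ∧ w f < w e) with hFdef
    have hFfacts : ∀ f ∈ F, f ∈ G.edgeSet ∧ f ≠ e ∧ R e f := by
      intro f hf
      rw [hFdef, Finset.mem_filter, SimpleGraph.mem_edgeFinset] at hf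
      refine ⟨hf.1, ?_, hf.2.1⟩
      intro hfe
      subst hfe
      exact lt_irrefl _ hf.2.2
    have hprec : ∀ f ∈ F, idx (Lo f) < j ∨ (Lo f = v ∧ idx (Hi f) < i) := by
      intro f hf
      have hwf : w f < w e := by
        rw [hFdef, Finset.mem_filter] at hf
        exact hf.2.2
      rw [hwdef] at hwf
      rcases nat_key_lt (hidxB _) (hidxB _) hwf with h | ⟨h1, h2⟩
      · exact Or.inl h
      · exact Or.inr ⟨hidx_inj h1, h2⟩
    -- `oth x f` : the endpoint of `f` other than `x`
    set oth : V → Sym2 V → V := fun x f => if Hi f = x then Lo f else Hi f with hothdef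
    have hoth_mk : ∀ (x : V) (f : Sym2 V), x ∈ f → s(x, oth x f) = f := by
      intro x f hx
      rw [hothdef]
      dsimp only
      rw [hmem] at hx
      by_cases h : Hi f = x
      · rw [if_pos h, Sym2.eq_swap, ← h]
        exact hmk f
      · rw [if_neg h]
        rcases hx with rfl | rfl
        · exact hmk f
        · exact absurd rfl h
    have hoth_adj : ∀ (x : V) (f : Sym2 V), x ∈ f → f ∈ G.edgeSet → G.Adj x (oth x f) := by
      intro x f hx hf
      rw [← hoth_mk x f hx, SimpleGraph.mem_edgeSet] at hf
      exact hf
    have hoth_inj : ∀ (x : V) (s : Finset (Sym2 V)), (∀ f ∈ s, x ∈ f) →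
        Set.InjOn (oth x) s := by
      intro x s hs f hf g hg hfg
      rw [← hoth_mk x f (hs f hf), ← hoth_mk x g (hs g hg), hfg]
    have hoth_mem : ∀ (x : V) (f : Sym2 V), x ∈ f → oth x f ∈ f := by
      intro x f hx
      rw [hothdef]
      dsimp only
      by_cases h : Hi f = x
      · rw [if_pos h]
        exact (hmem _ f).mpr (Or.inl rfl)
      · rw [if_neg h]
        exact (hmem _ f).mpr (Or.inr rfl)
    -- splitting F according to incidence with u, v
    set F1 := F.filter (fun f => u ∈ f) with hF1def
    set F2 := F.filter (fun f => u ∉ f ∧ v ∈ f) with hF2def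
    set F3 := F.filter (fun f => u ∉ f ∧ v ∉ f) with hF3def
    have hsplit : F.card ≤ F1.card + F2.card + F3.card := by
      have hsub : F ⊆ (F1 ∪ F2) ∪ F3 := by
        intro f hf
        simp only [Finset.mem_union, hF1def, hF2def, hF3def, Finset.mem_filter]
        by_cases h1 : u ∈ f
        · exact Or.inl (Or.inl ⟨hf, h1⟩)
        · by_cases h2 : v ∈ f
          · exact Or.inl (Or.inr ⟨hf, h1, h2⟩)
          · exact Or.inr ⟨hf, h1, h2⟩
      calc F.card ≤ ((F1 ∪ F2) ∪ F3).card := Finset.card_le_card hsub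
        _ ≤ (F1 ∪ F2).card + F3.card := Finset.card_union_le _ _
        _ ≤ F1.card + F2.card + F3.card := by
            have := Finset.card_union_le F1 F2
            omega
    -- some degrees
    set Nu := G.neighborFinset u with hNudef
    set Nv := G.neighborFinset v with hNvdef
    set Bk : V → Finset V := fun x => (G.neighborFinset x).filter (fun y => idx y < idx x)
      with hBkdef
    have hBk : ∀ x, (Bk x).card ≤ k := fun x => hback x
    -- bound for F1
    set P1 := (Nu.filter (fun y => idx y < j)).card with hP1def
    set Q := (Nv.filter (fun y => idx y < j)).card with hQdef
    have hF1card : F1.card ≤ P1 := by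
      rw [hP1def]
      refine Finset.card_le_card_of_injOn (oth u) ?_ (hoth_inj u F1 ?_)
      · intro f hf
        rw [hF1def, Finset.mem_coe, Finset.mem_filter] at hf
        obtain ⟨hfF, hu⟩ := hf
        obtain ⟨hfE, hfne, _⟩ := hFfacts f hfF
        have hadj := hoth_adj u f hu hfE
        have hothv : oth u f ≠ v := by
          intro hov
          apply hfne
          rw [← hoth_mk u f hu, hov, Sym2.eq_swap, h_e_eq]
        -- u must be the Hi endpoint of f
        have hu' : u = Hi f := by
          rcases (hmem u f).mp hu with h | h
          · exfalso
            rcases hprec f hfF with hlt | ⟨heq, _⟩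
            · rw [← h] at hlt
              exact absurd hlt (by omega)
            · rw [← h] at heq
              exact hne_uv heq
          · exact h
        have hoLo : oth u f = Lo f := by
          rw [hothdef]
          dsimp only
          rw [if_pos hu'.symm]
        have hidxo : idx (oth u f) < j := by
          rcases hprec f hfF with hlt | ⟨heq, _⟩
          · rw [hoLo]; exact hlt
          · exact absurd (hoLo.trans heq) hothv
        simp only [Finset.mem_coe, Finset.mem_filter, hNudef, SimpleGraph.mem_neighborFinset]
        exact ⟨hadj, hidxo⟩
      · intro f hf
        rw [hF1def, Finset.mem_filter] at hf
        exact hf.2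
    have hF2card : F2.card ≤ Δ - 1 := by
      have h1 : F2.card ≤ (Nv.erase u).card := by
        refine Finset.card_le_card_of_injOn (oth v) ?_ (hoth_inj v F2 ?_)
        · intro f hf
          rw [hF2def, Finset.mem_coe, Finset.mem_filter] at hf
          obtain ⟨hfF, hnu, hv⟩ := hf
          obtain ⟨hfE, hfne, _⟩ := hFfacts f hfF
          refine Finset.mem_erase.mpr ⟨?_, ?_⟩
          · intro h
            exact hnu (h ▸ hoth_mem v f hv)
          · rw [hNvdef, SimpleGraph.mem_neighborFinset]
            exact hoth_adj v f hv hfE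
        · intro f hf
          rw [hF2def, Finset.mem_filter] at hf
          exact hf.2.2
      have h2 : u ∈ Nv := by
        rw [hNvdef, SimpleGraph.mem_neighborFinset]
        exact hadj_uv.symm
      have h3 := Finset.card_erase_of_mem h2
      have h4 : Nv.card ≤ Δ := G.degree_le_maxDegree v
      omega
    -- the set of relevant third vertices
    set D3 := ((Nu ∪ Nv).erase u).erase v with hD3def
    have hD3mem : ∀ x, x ∈ D3 ↔ (x ≠ v ∧ x ≠ u ∧ (G.Adj u x ∨ G.Adj v x)) := by
      intro x
      rw [hD3def]
      simp only [Finset.mem_erase, Finset.mem_union, hNudef, hNvdef,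
        SimpleGraph.mem_neighborFinset]
    -- each f in F3 has an endpoint in D3
    have hF3end : ∀ f ∈ F3, (Lo f ∈ D3 ∨ Hi f ∈ D3) := by
      intro f hf
      rw [hF3def, Finset.mem_filter] at hf
      obtain ⟨hfF, hnu, hnv⟩ := hf
      obtain ⟨hfE, hfne, hRef⟩ := hFfacts f hfF
      have hyD3 : ∃ y ∈ f, y ∈ D3 := by
        rw [hRdef] at hRef
        rcases hRef with ⟨z, hze, hzf⟩ | ⟨g, hg, ⟨z, hze, hzg⟩, ⟨y, hyg, hyf⟩⟩
        · exfalso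
          rw [← h_e_eq, Sym2.mem_iff] at hze
          rcases hze with rfl | rfl
          · exact hnv hzf
          · exact hnu hzf
        · have hzuv : z = v ∨ z = u := by
            rw [← h_e_eq, Sym2.mem_iff] at hze
            exact hze
          have hyz : y ≠ z := by
            intro h
            subst h
            rcases hzuv with rfl | rfl
            · exact hnv hyf
            · exact hnu hyf
          have hadj_zy : G.Adj z y := by
            have hadj_g := (hedge g hg).1
            rw [hmem] at hzg hyg
            rcases hzg with h1 | h1 <;> rcases hyg with h2 | h2
            · exact absurd (h1.trans h2.symm).symm hyz
            · rw [h1, h2]; exact hadj_g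
            · rw [h1, h2]; exact hadj_g.symm
            · exact absurd (h1.trans h2.symm).symm hyz
          refine ⟨y, hyf, (hD3mem y).mpr ⟨?_, ?_, ?_⟩⟩
          · intro h; subst h; exact hnv hyf
          · intro h; subst h; exact hnu hyf
          · rcases hzuv with rfl | rfl
            · exact Or.inr hadj_zy
            · exact Or.inl hadj_zy
      obtain ⟨y, hyf, hyD3⟩ := hyD3
      rw [hmem] at hyf
      rcases hyf with rfl | rfl
      · exact Or.inl hyD3
      · exact Or.inr hyD3
    -- the charging map and fibers
    set χ : Sym2 V → V := fun f => if Hi f ∈ D3 then Hi f else Lo f with hχdef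
    set Fib : V → Finset (Sym2 V) := fun x => F3.filter (fun f => χ f = x) with hFibdef
    have hχD3 : ∀ f ∈ F3, χ f ∈ D3 ∧ χ f ∈ f := by
      intro f hf
      rw [hχdef]
      dsimp only
      by_cases h : Hi f ∈ D3
      · rw [if_pos h]
        exact ⟨h, (hmem _ f).mpr (Or.inr rfl)⟩
      · rw [if_neg h]
        rcases hF3end f hf with h1 | h1
        · exact ⟨h1, (hmem _ f).mpr (Or.inl rfl)⟩
        · exact absurd h1 h
    have hF3card : F3.card ≤ ∑ x ∈ D3, (Fib x).card := by
      refine le_trans (Finset.card_le_card ?_) (Finset.card_biUnion_le)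
      intro f hf
      rw [Finset.mem_biUnion]
      refine ⟨χ f, (hχD3 f hf).1, ?_⟩
      rw [hFibdef]
      dsimp only
      exact Finset.mem_filter.mpr ⟨hf, rfl⟩
    -- facts about fibers
    have hFib_mem : ∀ x, ∀ f ∈ Fib x, f ∈ F3 ∧ χ f = x := by
      intro x f hf
      rw [hFibdef, Finset.mem_filter] at hf
      exact hf
    have hFib_x_mem : ∀ x, ∀ f ∈ Fib x, x ∈ f := by
      intro x f hf
      obtain ⟨h1, h2⟩ := hFib_mem x f hf
      rw [← h2]
      exact (hχD3 f h1).2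
    have hF3low : ∀ f ∈ F3, idx (Lo f) < j := by
      intro f hf
      have hfF : f ∈ F := by
        rw [hF3def, Finset.mem_filter] at hf
        exact hf.1
      rcases hprec f hfF with h | ⟨h1, _⟩
      · exact h
      · exfalso
        rw [hF3def, Finset.mem_filter] at hf
        exact hf.2.2 (h1 ▸ (hmem _ f).mpr (Or.inl rfl))
    have hFib_hi : ∀ x, j < idx x → ∀ f ∈ Fib x, Hi f = x ∧ oth x f = Lo f := by
      intro x hx f hf
      obtain ⟨h1, h2⟩ := hFib_mem x f hf
      rw [hχdef] at h2
      dsimp only at h2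
      by_cases h : Hi f ∈ D3
      · rw [if_pos h] at h2
        refine ⟨h2, ?_⟩
        rw [hothdef]
        dsimp only
        rw [if_pos h2]
      · rw [if_neg h] at h2
        exfalso
        have := hF3low f h1
        rw [h2] at this
        omega
    -- generic fiber bounds
    have hFib_notuv : ∀ x, ∀ f ∈ Fib x, u ∉ f ∧ v ∉ f := by
      intro x f hf
      have h := (hFib_mem x f hf).1
      rw [hF3def, Finset.mem_filter] at h
      exact h.2
    have hFib_edge : ∀ x, ∀ f ∈ Fib x, f ∈ G.edgeSet := by
      intro x f hf
      have h := (hFib_mem x f hf).1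
      rw [hF3def, Finset.mem_filter] at h
      exact (hFfacts f h.1).1
    -- fiber bound (a) : any x ∈ D3 has fiber of size at most Δ - 1
    have hbA : ∀ x ∈ D3, (Fib x).card ≤ Δ - 1 := by
      intro x hx
      have h1 : (Fib x).card ≤ (((G.neighborFinset x).erase u).erase v).card := by
        refine Finset.card_le_card_of_injOn (oth x) ?_ (hoth_inj x _ (hFib_x_mem x))
        intro f hf
        have hxf := hFib_x_mem x f hf
        have ⟨hnu, hnv⟩ := hFib_notuv x f hf
        refine Finset.mem_erase.mpr ⟨?_, Finset.mem_erase.mpr ⟨?_, ?_⟩⟩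
        · intro h; exact hnv (h ▸ hoth_mem x f hxf)
        · intro h; exact hnu (h ▸ hoth_mem x f hxf)
        · rw [SimpleGraph.mem_neighborFinset]
          exact hoth_adj x f hxf (hFib_edge x f hf)
      have hx' := (hD3mem x).mp hx
      have h2 : u ∈ G.neighborFinset x ∨ v ∈ G.neighborFinset x := by
        rcases hx'.2.2 with h | h
        · exact Or.inl (by rw [SimpleGraph.mem_neighborFinset]; exact h.symm)
        · exact Or.inr (by rw [SimpleGraph.mem_neighborFinset]; exact h.symm)
      have h3 : (((G.neighborFinset x).erase u).erase v).card ≤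
          (G.neighborFinset x).card - 1 := by
        rcases h2 with h | h
        · calc (((G.neighborFinset x).erase u).erase v).card
              ≤ ((G.neighborFinset x).erase u).card := Finset.card_le_card (Finset.erase_subset _ _)
            _ = (G.neighborFinset x).card - 1 := Finset.card_erase_of_mem h
        · rw [Finset.erase_right_comm]
          calc (((G.neighborFinset x).erase v).erase u).card
              ≤ ((G.neighborFinset x).erase v).card := Finset.card_le_card (Finset.erase_subset _ _)
            _ = (G.neighborFinset x).card - 1 := Finset.card_erase_of_mem h
      have h4 : (G.neighborFinset x).card ≤ Δ := G.degree_le_maxDegree x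
      omega
    -- fiber bound for high vertices : they map into Bk x
    have hbHigh : ∀ x, j < idx x → (Fib x).card ≤ (Bk x).card := by
      intro x hx
      refine Finset.card_le_card_of_injOn (oth x) ?_ (hoth_inj x _ (hFib_x_mem x))
      intro f hf
      have hxf := hFib_x_mem x f hf
      obtain ⟨hhi, holo⟩ := hFib_hi x hx f hf
      rw [hBkdef]
      dsimp only
      rw [Finset.mem_coe, Finset.mem_filter, SimpleGraph.mem_neighborFinset]
      refine ⟨hoth_adj x f hxf (hFib_edge x f hf), ?_⟩
      rw [holo]
      have := hF3low f (hFib_mem x f hf).1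
      omega
    have hbHighErase : ∀ x, j < idx x → ∀ z, z ∈ Bk x → z ∉ s(x, x) → True := by
      intro _ _ _ _ _; trivial
    -- refined bound : the other endpoint avoids u and v, so erase works
    have hbHighE : ∀ (x z : V), j < idx x → z ∈ Bk x → (z = u ∨ z = v) →
        (Fib x).card ≤ (Bk x).card - 1 := by
      intro x z hx hz hzuv
      have h1 : (Fib x).card ≤ ((Bk x).erase z).card := by
        refine Finset.card_le_card_of_injOn (oth x) ?_ (hoth_inj x _ (hFib_x_mem x))
        intro f hf
        have hxf := hFib_x_mem x f hf
        obtain ⟨hhi, holo⟩ := hFib_hi x hx f hf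
        have ⟨hnu, hnv⟩ := hFib_notuv x f hf
        refine Finset.mem_erase.mpr ⟨?_, ?_⟩
        · intro h
          rcases hzuv with rfl | rfl
          · exact hnu (h ▸ hoth_mem x f hxf)
          · exact hnv (h ▸ hoth_mem x f hxf)
        · rw [hBkdef]
          dsimp only
          rw [Finset.mem_filter, SimpleGraph.mem_neighborFinset]
          refine ⟨hoth_adj x f hxf (hFib_edge x f hf), ?_⟩
          rw [holo]
          have := hF3low f (hFib_mem x f hf).1
          omega
      have h2 := Finset.card_erase_of_mem hz
      omega
    -- the four index classes
    set SA := D3.filter (fun x => idx x < j) with hSAdef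
    set SB := D3.filter (fun x => j < idx x ∧ G.Adj u x ∧ idx x < i) with hSBdef
    set SCu := D3.filter (fun x => G.Adj u x ∧ i < idx x) with hSCudef
    set SCv := D3.filter (fun x => j < idx x ∧ ¬ G.Adj u x) with hSCvdef
    have hcover : D3 ⊆ ((SA ∪ SB) ∪ SCu) ∪ SCv := by
      intro x hx
      have hx' := (hD3mem x).mp hx
      have hxj : idx x ≠ j := fun h => hx'.1 (hidx_inj h)
      have hxi : idx x ≠ i := fun h => hx'.2.1 (hidx_inj h)
      simp only [Finset.mem_union, hSAdef, hSBdef, hSCudef, hSCvdef, Finset.mem_filter]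
      rcases lt_trichotomy (idx x) j with h | h | h
      · exact Or.inl (Or.inl (Or.inl ⟨hx, h⟩))
      · exact absurd h hxj
      · by_cases hadj : G.Adj u x
        · rcases lt_trichotomy (idx x) i with h2 | h2 | h2
          · exact Or.inl (Or.inl (Or.inr ⟨hx, h, hadj, h2⟩))
          · exact absurd h2 hxi
          · exact Or.inl (Or.inr ⟨hx, hadj, h2⟩)
        · exact Or.inr ⟨hx, h, hadj⟩
    -- sum over unions
    have hUle : ∀ (s t : Finset V), ∑ x ∈ s ∪ t, (Fib x).card ≤
        (∑ x ∈ s, (Fib x).card) + ∑ x ∈ t, (Fib x).card := by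
      intro s t
      have := Finset.sum_union_inter (s₁ := s) (s₂ := t) (f := fun x => (Fib x).card)
      omega
    have hsumsplit : ∑ x ∈ D3, (Fib x).card ≤
        (∑ x ∈ SA, (Fib x).card) + (∑ x ∈ SB, (Fib x).card) +
        (∑ x ∈ SCu, (Fib x).card) + ∑ x ∈ SCv, (Fib x).card := by
      have h0 : ∑ x ∈ D3, (Fib x).card ≤ ∑ x ∈ ((SA ∪ SB) ∪ SCu) ∪ SCv, (Fib x).card :=
        Finset.sum_le_sum_of_subset hcover
      have h1 := hUle ((SA ∪ SB) ∪ SCu) SCv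
      have h2 := hUle (SA ∪ SB) SCu
      have h3 := hUle SA SB
      omega
    -- bounds for each class
    set M := min k (Δ - 1) with hMdef
    have hsumA : ∑ x ∈ SA, (Fib x).card ≤ SA.card * (Δ - 1) := by
      rw [← smul_eq_mul]
      refine Finset.sum_le_card_nsmul _ _ _ ?_
      intro x hx
      rw [hSAdef, Finset.mem_filter] at hx
      exact hbA x hx.1
    have hsumB : ∑ x ∈ SB, (Fib x).card ≤ SB.card * M := by
      rw [← smul_eq_mul]
      refine Finset.sum_le_card_nsmul _ _ _ ?_
      intro x hx
      rw [hSBdef, Finset.mem_filter] at hx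
      obtain ⟨hxD3, hxj, hadj, hxi⟩ := hx
      rw [hMdef]
      refine le_min ?_ ?_
      · exact le_trans (hbHigh x hxj) (hBk x)
      · have h1 : (Fib x).card ≤ (((G.neighborFinset x).erase u).erase v).card := by
          refine Finset.card_le_card_of_injOn (oth x) ?_ (hoth_inj x _ (hFib_x_mem x))
          intro f hf
          have hxf := hFib_x_mem x f hf
          have ⟨hnu, hnv⟩ := hFib_notuv x f hf
          refine Finset.mem_erase.mpr ⟨?_, Finset.mem_erase.mpr ⟨?_, ?_⟩⟩
          · intro h; exact hnv (h ▸ hoth_mem x f hxf)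
          · intro h; exact hnu (h ▸ hoth_mem x f hxf)
          · rw [SimpleGraph.mem_neighborFinset]
            exact hoth_adj x f hxf (hFib_edge x f hf)
        have h2 : u ∈ G.neighborFinset x := by
          rw [SimpleGraph.mem_neighborFinset]; exact hadj.symm
        have h3 : (((G.neighborFinset x).erase u).erase v).card ≤
            (G.neighborFinset x).card - 1 := by
          calc (((G.neighborFinset x).erase u).erase v).card
              ≤ ((G.neighborFinset x).erase u).card :=
                Finset.card_le_card (Finset.erase_subset _ _)
            _ = (G.neighborFinset x).card - 1 := Finset.card_erase_of_mem h2
        have h4 : (G.neighborFinset x).card ≤ Δ := G.degree_le_maxDegree x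
        omega
    have hsumCu : ∑ x ∈ SCu, (Fib x).card ≤ SCu.card * (k - 1) := by
      rw [← smul_eq_mul]
      refine Finset.sum_le_card_nsmul _ _ _ ?_
      intro x hx
      rw [hSCudef, Finset.mem_filter] at hx
      obtain ⟨hxD3, hadj, hxi⟩ := hx
      have hxj : j < idx x := lt_trans hji hxi
      have hu_mem : u ∈ Bk x := by
        rw [hBkdef]
        dsimp only
        rw [Finset.mem_filter, SimpleGraph.mem_neighborFinset]
        exact ⟨hadj.symm, hxi⟩
      have := hbHighE x u hxj hu_mem (Or.inl rfl)
      have := hBk x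
      omega
    have hsumCv : ∑ x ∈ SCv, (Fib x).card ≤ SCv.card * (k - 1) := by
      rw [← smul_eq_mul]
      refine Finset.sum_le_card_nsmul _ _ _ ?_
      intro x hx
      rw [hSCvdef, Finset.mem_filter] at hx
      obtain ⟨hxD3, hxj, hnadj⟩ := hx
      have hadjv : G.Adj v x := by
        rcases ((hD3mem x).mp hxD3).2.2 with h | h
        · exact absurd h hnadj
        · exact h
      have hv_mem : v ∈ Bk x := by
        rw [hBkdef]
        dsimp only
        rw [Finset.mem_filter, SimpleGraph.mem_neighborFinset]
        exact ⟨hadjv.symm, hxj⟩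
      have := hbHighE x v hxj hv_mem (Or.inr rfl)
      have := hBk x
      omega
    -- cardinalities of the index classes
    have hSAcard : SA.card ≤ P1 + Q := by
      rw [hP1def, hQdef]
      refine le_trans (Finset.card_le_card ?_) (Finset.card_union_le _ _)
      intro x hx
      rw [hSAdef, Finset.mem_filter] at hx
      obtain ⟨hxD3, hxj⟩ := hx
      rcases ((hD3mem x).mp hxD3).2.2 with h | h
      · exact Finset.mem_union_left _ (Finset.mem_filter.mpr
          ⟨by rw [hNudef, SimpleGraph.mem_neighborFinset]; exact h, hxj⟩)
      · exact Finset.mem_union_right _ (Finset.mem_filter.mpr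
          ⟨by rw [hNvdef, SimpleGraph.mem_neighborFinset]; exact h, hxj⟩)
    have hQk : Q ≤ k := by
      rw [hQdef]
      exact le_trans (Finset.card_le_card (by intro y hy; exact hy)) (hback v)
    -- partition of the neighborhood of u
    set S1 := Nu.filter (fun y => idx y < j) with hS1def
    set S2 := Nu.filter (fun y => j < idx y ∧ idx y < i) with hS2def
    set S4 := Nu.filter (fun y => i < idx y) with hS4def
    have hd12 : Disjoint S1 S2 := by
      rw [Finset.disjoint_left]
      intro a ha hb
      rw [hS1def, Finset.mem_filter] at ha
      rw [hS2def, Finset.mem_filter] at hb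
      omega
    have hvS12 : v ∉ S1 ∪ S2 := by
      intro hx
      rw [Finset.mem_union, hS1def, hS2def, Finset.mem_filter, Finset.mem_filter] at hx
      rcases hx with hx | hx <;> omega
    have hS12v_sub : insert v (S1 ∪ S2) ⊆ Bk u := by
      intro x hx
      rw [Finset.mem_insert, Finset.mem_union] at hx
      rw [hBkdef]
      dsimp only
      rw [Finset.mem_filter, SimpleGraph.mem_neighborFinset]
      rcases hx with rfl | hx | hx
      · exact ⟨hadj_uv, hji⟩
      · rw [hS1def, Finset.mem_filter, hNudef, SimpleGraph.mem_neighborFinset] at hx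
        exact ⟨hx.1, by omega⟩
      · rw [hS2def, Finset.mem_filter, hNudef, SimpleGraph.mem_neighborFinset] at hx
        exact ⟨hx.1, by omega⟩
    have hPBp : P1 + S2.card + 1 ≤ k := by
      have h1 : (insert v (S1 ∪ S2)).card = S1.card + S2.card + 1 := by
        rw [Finset.card_insert_of_notMem hvS12, Finset.card_union_of_disjoint hd12]
      have h2 : (insert v (S1 ∪ S2)).card ≤ (Bk u).card :=
        Finset.card_le_card hS12v_sub
      have h3 := hBk u
      have h4 : P1 = S1.card := by rw [hP1def, hS1def]
      omega
    have hSB_S2 : SB.card ≤ S2.card := by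
      refine Finset.card_le_card ?_
      intro x hx
      rw [hSBdef, Finset.mem_filter] at hx
      rw [hS2def, Finset.mem_filter, hNudef, SimpleGraph.mem_neighborFinset]
      exact ⟨hx.2.2.1, hx.2.1, hx.2.2.2⟩
    -- degree of u gives the bound on SCu
    have hSCu_S4 : SCu.card ≤ S4.card := by
      refine Finset.card_le_card ?_
      intro x hx
      rw [hSCudef, Finset.mem_filter] at hx
      rw [hS4def, Finset.mem_filter, hNudef, SimpleGraph.mem_neighborFinset]
      exact ⟨hx.2.1, hx.2.2⟩
    have hdegu : S1.card + S2.card + 1 + S4.card ≤ Δ := by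
      have hsub : insert v ((S1 ∪ S2) ∪ S4) ⊆ Nu := by
        intro x hx
        rw [Finset.mem_insert, Finset.mem_union, Finset.mem_union] at hx
        rcases hx with rfl | (hx | hx) | hx
        · rw [hNudef, SimpleGraph.mem_neighborFinset]; exact hadj_uv
        · exact Finset.mem_of_mem_filter _ hx
        · exact Finset.mem_of_mem_filter _ hx
        · exact Finset.mem_of_mem_filter _ hx
      have hd124 : Disjoint (S1 ∪ S2) S4 := by
        rw [Finset.disjoint_left]
        intro a ha hb
        rw [Finset.mem_union, hS1def, hS2def, Finset.mem_filter, Finset.mem_filter] at ha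
        rw [hS4def, Finset.mem_filter] at hb
        rcases ha with ha | ha <;> omega
      have hv124 : v ∉ (S1 ∪ S2) ∪ S4 := by
        intro hx
        rw [Finset.mem_union] at hx
        rcases hx with hx | hx
        · exact hvS12 hx
        · rw [hS4def, Finset.mem_filter] at hx
          omega
      have h1 : (insert v ((S1 ∪ S2) ∪ S4)).card = S1.card + S2.card + S4.card + 1 := by
        rw [Finset.card_insert_of_notMem hv124, Finset.card_union_of_disjoint hd124,
          Finset.card_union_of_disjoint hd12]
      have h2 := Finset.card_le_card hsub
      have h3 : Nu.card ≤ Δ := G.degree_le_maxDegree u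
      omega
    -- degree of v gives the bound on SCv
    have hdegv : Q + 1 + SCv.card ≤ Δ := by
      set T2 := Nv.filter (fun y => j < idx y) with hT2def
      have hu_T2 : u ∈ T2 := by
        rw [hT2def, Finset.mem_filter, hNvdef, SimpleGraph.mem_neighborFinset]
        exact ⟨hadj_uv.symm, hji⟩
      have hSCv_sub : SCv ⊆ T2.erase u := by
        intro x hx
        rw [hSCvdef, Finset.mem_filter] at hx
        obtain ⟨hxD3, hxj, hnadj⟩ := hx
        have hx' := (hD3mem x).mp hxD3
        refine Finset.mem_erase.mpr ⟨hx'.2.1, ?_⟩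
        rw [hT2def, Finset.mem_filter, hNvdef, SimpleGraph.mem_neighborFinset]
        rcases hx'.2.2 with h | h
        · exact absurd h hnadj
        · exact ⟨h, hxj⟩
      have h1 : SCv.card ≤ T2.card - 1 := by
        have := Finset.card_le_card hSCv_sub
        have := Finset.card_erase_of_mem hu_T2
        omega
      have h2 : Q + T2.card ≤ Nv.card := by
        have hdisj : Disjoint (Nv.filter (fun y => idx y < j)) T2 := by
          rw [Finset.disjoint_left]
          intro a ha hb
          rw [Finset.mem_filter] at ha
          rw [hT2def, Finset.mem_filter] at hb
          omega
        have hsub : (Nv.filter (fun y => idx y < j)) ∪ T2 ⊆ Nv := by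
          intro x hx
          rw [Finset.mem_union] at hx
          rcases hx with hx | hx
          · exact Finset.mem_of_mem_filter _ hx
          · exact Finset.mem_of_mem_filter _ hx
        have := Finset.card_le_card hsub
        rw [Finset.card_union_of_disjoint hdisj] at this
        rw [hQdef]
        omega
      have h3 : Nv.card ≤ Δ := G.degree_le_maxDegree v
      have h4 : 1 ≤ T2.card := Finset.card_pos.mpr ⟨u, hu_T2⟩
      omega
    -- putting everything together
    have hFbound : F.card ≤ P1 + (Δ - 1) + (P1 + Q) * (Δ - 1) + SB.card * M +
        SCu.card * (k - 1) + SCv.card * (k - 1) := by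
      have h1 : SA.card * (Δ - 1) ≤ (P1 + Q) * (Δ - 1) :=
        Nat.mul_le_mul_right _ hSAcard
      omega
    -- the arithmetic
    have harith : F.card + 2 * k ^ 2 ≤ (4 * k - 2) * Δ := by
      set P2 := SB.card with hP2def
      set Cu := SCu.card with hCudef
      set Cv := SCv.card with hCvdef
      have c1 : P1 + P2 + 1 ≤ k := le_trans (by omega) hPBp
      have c2 : P1 + P2 + 1 + Cu ≤ Δ := by
        have := hSCu_S4
        omega
      have c3 : Q + 1 + Cv ≤ Δ := hdegv
      have c4 : Q ≤ k := hQk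
      have c5 : M ≤ k := min_le_left _ _
      have c6 : M + 1 ≤ Δ := by
        have := min_le_right k (Δ - 1)
        omega
      have c7 : 1 ≤ k := hk1
      have c8 : k ≤ Δ := hk
      have c9 : F.card ≤ P1 + (Δ - 1) + (P1 + Q) * (Δ - 1) + P2 * M +
          Cu * (k - 1) + Cv * (k - 1) := hFbound
      have e1 : 1 ≤ Δ := hΔ1
      zify [c7, e1, show (2:ℕ) ≤ 4 * k by omega] at c9 ⊢
      nlinarith [mul_nonneg (by linarith : (0:ℤ) ≤ 2*(k:ℤ) - 1 - P1 - Q - P2)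
          (by linarith : (0:ℤ) ≤ (Δ:ℤ) - k),
        mul_nonneg (by linarith : (0:ℤ) ≤ (P2:ℤ)) (by linarith : (0:ℤ) ≤ (Δ:ℤ) - 1 - M),
        mul_nonneg (by linarith : (0:ℤ) ≤ (Δ:ℤ) - 1 - P1 - P2 - Cu)
          (by linarith : (0:ℤ) ≤ (k:ℤ) - 1),
        mul_nonneg (by linarith : (0:ℤ) ≤ (Δ:ℤ) - 1 - Q - Cv)
          (by linarith : (0:ℤ) ≤ (k:ℤ) - 1)]
    have hLe := hL e heE
    have h2k : 2 * k ^ 2 ≤ (4 * k - 2) * Δ := by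
      have : 2 * k ≤ 4 * k - 2 := by omega
      calc 2 * k ^ 2 = (2 * k) * k := by ring
        _ ≤ (4 * k - 2) * Δ := Nat.mul_le_mul this hk
    omega
  obtain ⟨C, hC1, hC2⟩ :=
    exists_greedy_coloring R hRsymm w L G.edgeFinset hwinj (by
      intro e he
      have h := hcount e he
      convert h using 2
      ext x
      simp only [Finset.mem_filter])
  refine ⟨C, fun e he => hC1 e (SimpleGraph.mem_edgeFinset.mpr he), ?_⟩
  intro e he f hf hef hcond
  exact hC2 e (SimpleGraph.mem_edgeFinset.mpr he) f (SimpleGraph.mem_edgeFinset.mpr hf)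
    hef hcond
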